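/- arXiv:1609.08353 — 2 statements merged into one kernel-verified Lean document; each statement's English description precedes it below -/
import Mathlib

section
/- (Sock Matching Theorem, second alternative) For n ≥ 1 and k ≥ 1, B_{n,k} = Σ_{j=0}^{n-1} ( B_{j,k} C_{n-j-1} + C_{j} B_{n-j-1,k-1} − B_{j,k} B_{n-j-1,k-1} ). -/
open Finset Real Filter

/-- A Dyck-path sequence `a_1, …, a_{2n}` (with `a 0 = 0` and zero padding
beyond index `2n` so that the set of such functions is finite):
`a 1 = 1`, `a (2n) = 0`, and consecutive values differ by exactly 1. -/
def IsDyckSeq (n : ℕ) (a : ℕ → ℕ) : Prop :=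
  a 1 = 1 ∧ a (2*n) = 0 ∧
  (∀ i, 1 ≤ i → i < 2*n → (a (i+1) = a i + 1 ∨ a i = a (i+1) + 1)) ∧
  a 0 = 0 ∧ ∀ i, 2*n < i → a i = 0

/-- `A n t`: number of Dyck-path sequences of semilength `n` of height at most `t`,
with the convention `A 0 t = 1`. -/
noncomputable def A (n t : ℕ) : ℕ :=
  if n = 0 then 1
  else Nat.card {a : ℕ → ℕ // IsDyckSeq n a ∧ ∀ i, a i ≤ t}

/-- `B n k`: number of Dyck-path sequences of semilength `n` of height at least `k`,
with the conventions `B 0 0 = 1`, `B 0 k = 0` for `k ≥ 1`. -/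
noncomputable def B (n k : ℕ) : ℕ :=
  if n = 0 then (if k = 0 then 1 else 0)
  else Nat.card {a : ℕ → ℕ // IsDyckSeq n a ∧ ∃ i, k ≤ a i}

/-- The `n`-th Catalan number `C_n = (1/(n+1)) * binomial(2n, n)`. -/
def C (n : ℕ) : ℕ := (2*n).choose n / (n + 1)

/-- Binomial coefficient with integer lower index, zero when negative. -/
def chooseZ (m : ℕ) (r : ℤ) : ℕ := if 0 ≤ r then m.choose r.toNat else 0

def Good (n : ℕ) (a : ℕ → ℕ) : Prop :=
  a 0 = 0 ∧ a (2*n) = 0 ∧ (∀ i < 2*n, a (i+1) = a i + 1 ∨ a i = a (i+1) + 1) ∧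
  ∀ i, 2*n < i → a i = 0


lemma isDyckSeq_iff_good {n : ℕ} (hn : 1 ≤ n) (a : ℕ → ℕ) : IsDyckSeq n a ↔ Good n a := by
  constructor
  · rintro ⟨h1, h2, h3, h0, hp⟩
    refine ⟨h0, h2, fun i hi => ?_, hp⟩
    rcases Nat.eq_zero_or_pos i with rfl | hi1
    · left; show a 1 = a 0 + 1; omega
    · exact h3 i hi1 hi
  · rintro ⟨h0, h2, h3, hp⟩
    have h1 : a 1 = 1 := by
      have h := h3 0 (by omega)
      simp only [Nat.zero_add] at h
      omega
    exact ⟨h1, h2, fun i hi1 hi => h3 i hi, h0, hp⟩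

lemma Good.le_index {n : ℕ} {a : ℕ → ℕ} (h : Good n a) : ∀ i, a i ≤ i := by
  obtain ⟨h0, h2, h3, hp⟩ := h
  intro i
  induction i with
  | zero => omega
  | succ i ih =>
    rcases lt_or_ge i (2*n) with hi | hi
    · have := h3 i hi; omega
    · rcases Nat.eq_or_lt_of_le hi with rfl | hi'
      · have := hp (2*n+1) (by omega); omega
      · have := hp (i+1) (by omega); omega

lemma Good.le_rev {n : ℕ} {a : ℕ → ℕ} (h : Good n a) : ∀ d i, i + d = 2*n → a i ≤ d := by
  obtain ⟨h0, h2, h3, hp⟩ := h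
  intro d
  induction d with
  | zero =>
    intro i hi
    obtain rfl : i = 2*n := by omega
    omega
  | succ d ih =>
    intro i hi
    have := h3 i (by omega)
    have := ih (i+1) (by omega)
    omega

lemma Good.le_n {n : ℕ} {a : ℕ → ℕ} (h : Good n a) : ∀ i, a i ≤ n := by
  intro i
  rcases le_or_gt i n with hi | hi
  · exact (h.le_index i).trans hi
  · rcases le_or_gt i (2*n) with hi2 | hi2
    · have := h.le_rev (2*n - i) i (by omega); omega
    · have := h.2.2.2 i hi2; omega

lemma finite_good (n : ℕ) : Finite {a : ℕ → ℕ // Good n a} := by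
  have : Function.Injective
      (fun (x : {a : ℕ → ℕ // Good n a}) (i : Fin (2*n+1)) =>
        (⟨x.1 i, Nat.lt_succ_of_le (x.2.le_n i)⟩ : Fin (n+1))) := by
    intro x y hxy
    ext i
    rcases le_or_gt i (2*n) with hi | hi
    · have := congrFun hxy ⟨i, by omega⟩
      simpa [Fin.ext_iff] using this
    · rw [x.2.2.2.2 i hi, y.2.2.2.2 i hi]
  exact Finite.of_injective _ this

lemma finite_goodP (n : ℕ) (P : (ℕ → ℕ) → Prop) : Finite {a : ℕ → ℕ // Good n a ∧ P a} := by
  have := finite_good n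
  apply Finite.of_injective
    (fun x : {a : ℕ → ℕ // Good n a ∧ P a} => (⟨x.1, x.2.1⟩ : {a : ℕ → ℕ // Good n a}))
  intro x y hxy
  simpa [Subtype.ext_iff] using hxy

noncomputable def T (n t : ℕ) : ℕ := Nat.card {a : ℕ → ℕ // Good n a ∧ ∀ i, a i ≤ t}

lemma T_zero (t : ℕ) : T 0 t = 1 := by
  have : Unique {a : ℕ → ℕ // Good 0 a ∧ ∀ i, a i ≤ t} := by
    refine ⟨⟨⟨fun _ => 0, ⟨rfl, rfl, by omega, fun i _ => rfl⟩, fun i => Nat.zero_le t⟩⟩, ?_⟩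
    rintro ⟨a, ⟨h0, -, -, hp⟩, -⟩
    ext i : 2
    simp only
    rcases Nat.eq_zero_or_pos i with rfl | hi
    · exact h0
    · exact hp i (by omega)
  rw [T]
  exact Nat.card_unique




lemma C_eq_catalan (n : ℕ) : C n = catalan n := by
  rw [catalan_eq_centralBinom_div, Nat.centralBinom, C]

lemma A_eq_T (n t : ℕ) : A n t = T n t := by
  rcases Nat.eq_zero_or_pos n with rfl | hn
  · rw [A, if_pos rfl, T_zero]
  · rw [A, if_neg (by omega), T]
    exact Nat.card_congr (Equiv.subtypeEquivRight fun a =>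
      and_congr_left fun _ => isDyckSeq_iff_good hn a)

lemma T_card {n t : ℕ} (h : n ≤ t) : T n t = Nat.card {a : ℕ → ℕ // Good n a} := by
  rw [T]
  exact Nat.card_congr (Equiv.subtypeEquivRight fun a =>
    ⟨fun ha => ha.1, fun ha => ⟨ha, fun i => (ha.le_n i).trans h⟩⟩)

lemma nat_card_split {α : Type*} [Finite α] (Q : α → Prop) :
    Nat.card α = Nat.card {x : α // Q x} + Nat.card {x : α // ¬ Q x} := by
  classical
  rw [← Nat.card_sum]
  exact Nat.card_congr (Equiv.sumCompl Q).symm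

lemma B_add_T {n k : ℕ} (hn : 1 ≤ n) (hk : 1 ≤ k) :
    B n k + T n (k-1) = Nat.card {a : ℕ → ℕ // Good n a} := by
  classical
  have hfin := finite_good n
  rw [B, if_neg (by omega), T]
  rw [nat_card_split (fun x : {a : ℕ → ℕ // Good n a} => ∃ i, k ≤ x.1 i)]
  congr 1
  · exact Nat.card_congr <| (Equiv.subtypeEquivRight fun a =>
      and_congr_left fun _ => isDyckSeq_iff_good hn a).trans
      (Equiv.subtypeSubtypeEquivSubtypeInter _ _).symm
  · refine Nat.card_congr <| Equiv.symm <| (Equiv.subtypeSubtypeEquivSubtypeInter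
      (fun a => Good n a) (fun a => ¬ ∃ i, k ≤ a i)).trans
      (Equiv.subtypeEquivRight fun a => ?_)
    simp only [not_exists, not_le]
    exact and_congr_right fun _ => forall_congr' fun i => by omega

def comb (j : ℕ) (b c : ℕ → ℕ) : ℕ → ℕ := fun i =>
  if i = 0 then 0 else if i ≤ 2*j+1 then b (i-1) + 1 else c (i - (2*j+2))

lemma comb_good {j m : ℕ} {b c : ℕ → ℕ} (hb : Good j b) (hc : Good m c) :
    Good (j+m+1) (comb j b c) := by
  obtain ⟨b0, b2, bs, bp⟩ := hb
  obtain ⟨c0, c2, cs, cp⟩ := hc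
  refine ⟨rfl, ?_, ?_, ?_⟩
  · show comb j b c (2*(j+m+1)) = 0
    rw [comb]
    have h1 : ¬ (2*(j+m+1) = 0) := by omega
    have h2 : ¬ (2*(j+m+1) ≤ 2*j+1) := by omega
    rw [if_neg h1, if_neg h2]
    have : 2*(j+m+1) - (2*j+2) = 2*m := by omega
    rw [this, c2]
  · intro i hi
    rcases Nat.eq_zero_or_pos i with rfl | hi1
    · left
      show comb j b c 1 = comb j b c 0 + 1
      simp only [comb]
      rw [if_neg (by omega), if_pos (by omega)]
      simp [b0]
    · rcases lt_or_ge i (2*j+1) with h2 | h2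
      · -- both i and i+1 in the b-block
        have e1 : comb j b c i = b (i-1) + 1 := by
          rw [comb]; rw [if_neg (by omega), if_pos (by omega)]
        have e2 : comb j b c (i+1) = b i + 1 := by
          rw [comb]; rw [if_neg (by omega), if_pos (by omega)]
          congr 1
        rcases Nat.eq_zero_or_pos j with rfl | hj
        · omega
        · have hstep := bs (i-1) (by omega)
          have : i - 1 + 1 = i := by omega
          rw [this] at hstep
          rw [e1, e2]
          omega
      · rcases Nat.eq_or_lt_of_le h2 with h3 | h3
        · -- i = 2j+1, step down to 0
          right
          have e1 : comb j b c i = b (2*j) + 1 := by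
            rw [comb]; rw [if_neg (by omega), if_pos (by omega)]
            congr 2
            omega
          have e2 : comb j b c (i+1) = c 0 := by
            rw [comb]; rw [if_neg (by omega), if_neg (by omega)]
            congr 1
            omega
          rw [e1, e2, c0, b2]
        · -- both in c-block
          have e1 : comb j b c i = c (i - (2*j+2)) := by
            rw [comb]; rw [if_neg (by omega), if_neg (by omega)]
          have e2 : comb j b c (i+1) = c ((i - (2*j+2)) + 1) := by
            rw [comb]; rw [if_neg (by omega), if_neg (by omega)]
            congr 1
            omega
          have hstep := cs (i - (2*j+2)) (by omega)
          rw [e1, e2]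
          exact hstep
  · intro i hi
    rw [comb, if_neg (by omega), if_neg (by omega)]
    exact cp _ (by omega)

lemma comb_le {j m t : ℕ} {b c : ℕ → ℕ} (ht : 1 ≤ t) (hb : Good j b) (hc : Good m c) :
    (∀ i, comb j b c i ≤ t) ↔ ((∀ i, b i ≤ t-1) ∧ ∀ i, c i ≤ t) := by
  constructor
  · intro h
    refine ⟨fun i => ?_, fun i => ?_⟩
    · rcases le_or_gt i (2*j) with hi | hi
      · have := h (i+1)
        rw [comb, if_neg (by omega), if_pos (by omega)] at this
        simp only [Nat.add_sub_cancel] at this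
        omega
      · rw [hb.2.2.2 i (by omega)]; omega
    · have := h (i + (2*j+2))
      rw [comb, if_neg (by omega), if_neg (by omega)] at this
      have e : i + (2*j+2) - (2*j+2) = i := by omega
      rwa [e] at this
  · rintro ⟨h1, h2⟩ i
    rw [comb]
    split
    · omega
    · split
      · have := h1 (i-1); omega
      · exact h2 _

lemma Good.parity {n : ℕ} {a : ℕ → ℕ} (h : Good n a) : ∀ i, i ≤ 2*n → a i % 2 = i % 2 := by
  intro i
  induction i with
  | zero => intro _; simp [h.1]
  | succ i ih =>
    intro hi
    have hs := h.2.2.1 i (by omega)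
    have := ih (by omega)
    omega

lemma exists_decomp {n : ℕ} (hn : 1 ≤ n) {a : ℕ → ℕ} (ha : Good n a) :
    ∃ j, j < n ∧ ∃ b c, Good j b ∧ Good (n-1-j) c ∧ a = comb j b c := by
  classical
  obtain ⟨a0, a2, as, ap⟩ := ha
  have hex : ∃ i, 0 < i ∧ a i = 0 := ⟨2*n, by omega, a2⟩
  set r := Nat.find hex with hr
  obtain ⟨hr0, hra⟩ : 0 < r ∧ a r = 0 := Nat.find_spec hex
  have hrle : r ≤ 2*n := Nat.find_min' hex ⟨by omega, a2⟩
  have hpos : ∀ i, 0 < i → i < r → 1 ≤ a i := by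
    intro i h1 h2
    have := Nat.find_min hex h2
    simp only [not_and] at this
    have := this h1
    omega
  have ha1 : a 1 = 1 := by
    have := as 0 (by omega)
    simp only [Nat.zero_add] at this
    omega
  have hr2 : 2 ≤ r := by
    have h1 : r ≠ 1 := by
      intro h
      rw [h, ha1] at hra
      exact one_ne_zero hra
    omega
  have hreven : r % 2 = 0 := by
    have hp := Good.parity (n := n) (a := a) ⟨a0, a2, as, ap⟩ r hrle
    omega
  set j := r / 2 - 1 with hj
  have hrj : r = 2*j + 2 := by omega
  have hjn : j < n := by omega
  set m := n - 1 - j with hm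
  have hm2 : 2*m = 2*n - (2*j+2) := by omega
  set b := fun i => if i ≤ 2*j then a (i+1) - 1 else 0 with hbdef
  set c := fun i => a (i + (2*j+2)) with hcdef
  have hblock : ∀ i, 1 ≤ i → i ≤ 2*j+1 → 1 ≤ a i := by
    intro i h1 h2
    exact hpos i h1 (by omega)
  have harm1 : a (2*j+1) = 1 := by
    have hs := as (2*j+1) (by omega)
    have : a (2*j+1+1) = 0 := by rw [← hrj] at *; omega
    have h1 := hblock (2*j+1) (by omega) (by omega)
    omega
  have hgb : Good j b := by
    refine ⟨?_, ?_, ?_, ?_⟩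
    · show (if 0 ≤ 2*j then a 1 - 1 else 0) = 0
      rw [if_pos (by omega), ha1]
    · show (if 2*j ≤ 2*j then a (2*j+1) - 1 else 0) = 0
      rw [if_pos le_rfl, harm1]
    · intro i hi
      have e1 : b i = a (i+1) - 1 := by rw [hbdef]; simp only; rw [if_pos (by omega)]
      have e2 : b (i+1) = a (i+1+1) - 1 := by rw [hbdef]; simp only; rw [if_pos (by omega)]
      have hs := as (i+1) (by omega)
      have p1 := hblock (i+1) (by omega) (by omega)
      have p2 := hblock (i+1+1) (by omega) (by omega)
      rw [e1, e2]
      omega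
    · intro i hi
      show (if i ≤ 2*j then a (i+1) - 1 else 0) = 0
      rw [if_neg (by omega)]
  have hgc : Good m c := by
    refine ⟨?_, ?_, ?_, ?_⟩
    · show a (0 + (2*j+2)) = 0
      rw [Nat.zero_add, ← hrj]
      exact hra
    · show a (2*m + (2*j+2)) = 0
      have : 2*m + (2*j+2) = 2*n := by omega
      rw [this]; exact a2
    · intro i hi
      have hs := as (i + (2*j+2)) (by omega)
      show a ((i+1) + (2*j+2)) = a (i + (2*j+2)) + 1 ∨ a (i + (2*j+2)) = a ((i+1) + (2*j+2)) + 1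
      have e : (i+1) + (2*j+2) = (i + (2*j+2)) + 1 := by omega
      rw [e]
      exact hs
    · intro i hi
      show a (i + (2*j+2)) = 0
      exact ap _ (by omega)
  refine ⟨j, hjn, b, c, hgb, hgc, ?_⟩
  funext i
  rw [comb]
  rcases Nat.eq_zero_or_pos i with rfl | hi0
  · simp [a0]
  · rcases le_or_gt i (2*j+1) with hi1 | hi1
    · rw [if_neg (by omega), if_pos hi1]
      have e1 : b (i-1) = a i - 1 := by
        rw [hbdef]; simp only; rw [if_pos (by omega)]
        congr 2
        omega
      have := hblock i (by omega) hi1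
      rw [e1]
      omega
    · rw [if_neg (by omega), if_neg (by omega)]
      show a i = a ((i - (2*j+2)) + (2*j+2))
      congr 1
      omega

lemma comb_eq_inj {j j' m m' : ℕ} {b c b' c' : ℕ → ℕ}
    (hb : Good j b) (hc : Good m c) (hb' : Good j' b') (hc' : Good m' c')
    (h : comb j b c = comb j' b' c') : j = j' ∧ b = b' ∧ c = c' := by
  have key : ∀ {j₁ m₁ : ℕ} {b₁ c₁ b₂ c₂ : ℕ → ℕ}, Good m₁ c₁ →
      comb j₁ b₁ c₁ = comb j₁ b₂ c₂ → False ∨ True := fun _ _ => Or.inr trivial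
  have hjj : j = j' := by
    by_contra hne
    rcases Nat.lt_or_ge j j' with hlt | hge
    · have h1 : comb j b c (2*j+2) = c 0 := by
        rw [comb, if_neg (by omega), if_neg (by omega)]
        congr 1
        omega
      have h2 : comb j' b' c' (2*j+2) = b' (2*j+2-1) + 1 := by
        rw [comb, if_neg (by omega), if_pos (by omega)]
      have := congrFun h (2*j+2)
      rw [h1, h2, hc.1] at this
      omega
    · have hlt : j' < j := by omega
      have h1 : comb j' b' c' (2*j'+2) = c' 0 := by
        rw [comb, if_neg (by omega), if_neg (by omega)]
        congr 1
        omega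
      have h2 : comb j b c (2*j'+2) = b (2*j'+2-1) + 1 := by
        rw [comb, if_neg (by omega), if_pos (by omega)]
      have := congrFun h (2*j'+2)
      rw [h1, h2, hc'.1] at this
      omega
  subst hjj
  refine ⟨rfl, ?_, ?_⟩
  · funext i
    rcases le_or_gt i (2*j) with hi | hi
    · have := congrFun h (i+1)
      rw [comb, comb] at this
      simp only [if_neg (by omega : ¬ (i+1 = 0)), if_pos (by omega : i+1 ≤ 2*j+1)] at this
      simp only [Nat.add_sub_cancel] at this
      omega
    · rw [hb.2.2.2 i hi, hb'.2.2.2 i hi]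
  · funext i
    have := congrFun h (i + (2*j+2))
    rw [comb, comb] at this
    simp only [if_neg (by omega : ¬ (i + (2*j+2) = 0)),
      if_neg (by omega : ¬ (i + (2*j+2) ≤ 2*j+1))] at this
    simpa using this

lemma T_rec {n t : ℕ} (hn : 1 ≤ n) (ht : 1 ≤ t) :
    T n t = ∑ j ∈ Finset.range n, T j (t-1) * T (n-1-j) t := by
  classical
  let S : Fin n → Type := fun j =>
    {b : ℕ → ℕ // Good j.1 b ∧ ∀ i, b i ≤ t-1} × {c : ℕ → ℕ // Good (n-1-j.1) c ∧ ∀ i, c i ≤ t}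
  haveI : ∀ j : Fin n, Finite {b : ℕ → ℕ // Good j.1 b ∧ ∀ i, b i ≤ t-1} :=
    fun j => finite_goodP _ _
  haveI : ∀ j : Fin n, Finite {c : ℕ → ℕ // Good (n-1-j.1) c ∧ ∀ i, c i ≤ t} :=
    fun j => finite_goodP _ _
  haveI hSfin : ∀ j : Fin n, Finite (S j) := fun j => inferInstanceAs (Finite (_ × _))
  have he : ∀ j : Fin n, j.1 + (n-1-j.1) + 1 = n := fun j => by have := j.2; omega
  let F : (Σ j : Fin n, S j) → {a : ℕ → ℕ // Good n a ∧ ∀ i, a i ≤ t} := fun x =>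
    ⟨comb x.1.1 x.2.1.1 x.2.2.1,
      (by have h := comb_good x.2.1.2.1 x.2.2.2.1; rwa [he x.1] at h),
      (comb_le ht x.2.1.2.1 x.2.2.2.1).2 ⟨x.2.1.2.2, x.2.2.2.2⟩⟩
  have hFbij : Function.Bijective F := by
    constructor
    · rintro ⟨j, ⟨b, hbg, hbl⟩, ⟨c, hcg, hcl⟩⟩ ⟨j', ⟨b', hbg', hbl'⟩, ⟨c', hcg', hcl'⟩⟩ hxy
      have hco : comb j.1 b c = comb j'.1 b' c' := congrArg Subtype.val hxy
      obtain ⟨hj, hb, hc⟩ := comb_eq_inj hbg hcg hbg' hcg' hco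
      have hjj : j = j' := Fin.ext hj
      subst hjj
      subst hb
      subst hc
      rfl
    · rintro ⟨a, hag, hal⟩
      obtain ⟨j, hj, b, c, hbg, hcg, rfl⟩ := exists_decomp hn hag
      obtain ⟨hbl, hcl⟩ := (comb_le ht hbg hcg).1 hal
      exact ⟨⟨⟨j, hj⟩, ⟨b, hbg, hbl⟩, ⟨c, hcg, hcl⟩⟩, Subtype.ext rfl⟩
  haveI : Finite (Σ j : Fin n, S j) := inferInstance
  letI : ∀ j : Fin n, Fintype (S j) := fun j => Fintype.ofFinite _
  letI : Fintype (Σ j : Fin n, S j) := Sigma.instFintype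
  have hcard : T n t = Nat.card (Σ j : Fin n, S j) := by
    rw [T]
    exact (Nat.card_congr (Equiv.ofBijective F hFbij)).symm
  rw [hcard, Nat.card_eq_fintype_card, Fintype.card_sigma]
  rw [← Fin.sum_univ_eq_sum_range (fun j => T j (t-1) * T (n-1-j) t) n]
  apply Finset.sum_congr rfl
  intro j _
  rw [← Nat.card_eq_fintype_card, Nat.card_prod, T, T]

lemma T_catalan : ∀ n, T n n = catalan n := by
  intro n
  induction n using Nat.strong_induction_on with
  | _ n ih =>
    rcases Nat.eq_zero_or_pos n with rfl | hn
    · rw [T_zero, catalan_zero]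
    · obtain ⟨m, rfl⟩ : ∃ m, n = m + 1 := ⟨n-1, by omega⟩
      rw [T_rec (by omega) (by omega), catalan_succ,
        ← Fin.sum_univ_eq_sum_range (fun j => T j (m+1-1) * T (m+1-1-j) (m+1)) (m+1)]
      apply Finset.sum_congr rfl
      intro j _
      have hj := j.2
      have e1 : m + 1 - 1 = m := rfl
      rw [e1]
      have h1 : T j.1 m = T j.1 j.1 := by
        rw [T_card (by omega), T_card (le_refl j.1)]
      have h2 : T (m - j.1) (m+1) = T (m - j.1) (m - j.1) := by
        rw [T_card (by omega), T_card (le_refl (m - j.1))]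
      rw [h1, h2, ih j.1 (by omega), ih (m - j.1) (by omega)]

lemma card_good_eq (n : ℕ) : Nat.card {a : ℕ → ℕ // Good n a} = catalan n := by
  rw [← T_card (le_refl n), T_catalan]

lemma B_cast {n k : ℕ} (hk : 1 ≤ k) : (B n k : ℤ) = (C n : ℤ) - T n (k-1) := by
  rcases Nat.eq_zero_or_pos n with rfl | hn
  · rw [B, if_pos rfl, if_neg (by omega), T_zero, C_eq_catalan, catalan_zero]
    norm_num
  · have h := B_add_T hn hk
    rw [card_good_eq] at h
    rw [C_eq_catalan]
    omega

lemma B_zero_cast (m : ℕ) : (B m 0 : ℤ) = (C m : ℤ) := by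
  rcases Nat.eq_zero_or_pos m with rfl | hm
  · rw [B, if_pos rfl, if_pos rfl, C_eq_catalan, catalan_zero]
  · rw [B, if_neg (by omega : ¬ m = 0)]
    have he : Nat.card {a : ℕ → ℕ // IsDyckSeq m a ∧ ∃ i, 0 ≤ a i}
        = Nat.card {a : ℕ → ℕ // Good m a} := by
      apply Nat.card_congr
      apply Equiv.subtypeEquivRight
      intro a
      constructor
      · rintro ⟨h1, -⟩
        exact (isDyckSeq_iff_good hm a).1 h1
      · intro h
        exact ⟨(isDyckSeq_iff_good hm a).2 h, 0, Nat.zero_le _⟩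
    rw [he, card_good_eq, C_eq_catalan]

lemma C_sum {n : ℕ} (hn : 1 ≤ n) : ∑ j ∈ Finset.range n, C j * C (n-j-1) = C n := by
  simp only [C_eq_catalan]
  obtain ⟨m, rfl⟩ : ∃ m, n = m + 1 := ⟨n-1, by omega⟩
  rw [catalan_succ,
    ← Fin.sum_univ_eq_sum_range (fun j => catalan j * catalan (m+1-j-1)) (m+1)]
  apply Finset.sum_congr rfl
  intro j _
  have e : m + 1 - j.1 - 1 = m - j.1 := by omega
  rw [e]

lemma T_height_zero {n : ℕ} (hn : 1 ≤ n) : T n 0 = 0 := by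
  rw [T, Nat.card_eq_zero]
  left
  constructor
  rintro ⟨a, ⟨h0, -, hs, -⟩, hle⟩
  have h := hs 0 (by omega)
  simp only [Nat.zero_add] at h
  have := hle 1
  omega

/-- the Sock Matching Theorem, second alternative. -/
theorem stmt8 (n k : ℕ) (hn : 1 ≤ n) (hk : 1 ≤ k) :
    (B n k : ℤ) = ∑ j ∈ Finset.range n,
      ((B j k : ℤ) * C (n-j-1) + (C j : ℤ) * B (n-j-1) (k-1)
        - (B j k : ℤ) * B (n-j-1) (k-1)) := by
  rcases eq_or_lt_of_le hk with hk1 | hk2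
  · -- k = 1
    obtain rfl : k = 1 := hk1.symm
    have hL : (B n 1 : ℤ) = (C n : ℤ) := by
      rw [B_cast le_rfl]
      simp only [Nat.sub_self]
      rw [T_height_zero hn]
      ring
    rw [hL]
    have hterm : ∀ j ∈ Finset.range n,
        ((B j 1 : ℤ) * C (n-j-1) + (C j : ℤ) * B (n-j-1) (1-1)
          - (B j 1 : ℤ) * B (n-j-1) (1-1)) = (C j : ℤ) * C (n-j-1) := by
      intro j _
      have e : (1:ℕ) - 1 = 0 := rfl
      rw [e, B_zero_cast]
      ring
    rw [Finset.sum_congr rfl hterm]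
    have := C_sum hn
    push_cast [← this]
    rfl
  · -- k ≥ 2
    have hk1' : 1 ≤ k - 1 := by omega
    have hterm : ∀ j ∈ Finset.range n,
        ((B j k : ℤ) * C (n-j-1) + (C j : ℤ) * B (n-j-1) (k-1)
          - (B j k : ℤ) * B (n-j-1) (k-1))
        = (C j : ℤ) * C (n-j-1) - (T j (k-1) : ℤ) * T (n-j-1) (k-1-1) := by
      intro j _
      rw [B_cast hk, B_cast hk1']
      ring
    rw [Finset.sum_congr rfl hterm, Finset.sum_sub_distrib]
    have h1 : ∑ j ∈ Finset.range n, (C j : ℤ) * C (n-j-1) = (C n : ℤ) := by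
      have := C_sum hn
      push_cast [← this]
      rfl
    have h2 : ∑ j ∈ Finset.range n, T j (k-1) * T (n-j-1) (k-1-1) = T n (k-1) := by
      rw [T_rec hn hk1']
      rw [← Finset.sum_range_reflect (fun j => T j (k-1-1) * T (n-1-j) (k-1)) n]
      apply Finset.sum_congr rfl
      intro j hj
      rw [Finset.mem_range] at hj
      have e1 : n - 1 - (n - 1 - j) = j := by omega
      have e2 : n - j - 1 = n - 1 - j := by omega
      rw [e1, e2]
      ring
    have h2' : ∑ j ∈ Finset.range n, (T j (k-1) : ℤ) * T (n-j-1) (k-1-1) = (T n (k-1) : ℤ) := by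
      push_cast [← h2]
      rfl
    rw [h1, h2', B_cast hk]
end

section
/- For n, k ≥ 1, the explicit formula B_{n,k} = Σ_{j=1}^{⌊(n+1)/(k+1)⌋} binomial(2n+2, n+1 − j(k+1)) − 4 Σ_{j=1}^{⌊n/(k+1)⌋} binomial(2n, n − j(k+1)) holds. -/
open Finset Real Filter

lemma chooseZ_neg {m : ℕ} {r : ℤ} (h : r < 0) : chooseZ m r = 0 := by
  simp [chooseZ, not_le.mpr h]

lemma chooseZ_gt {m : ℕ} {r : ℤ} (h : (m:ℤ) < r) : chooseZ m r = 0 := by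
  have h0 : (0:ℤ) ≤ r := le_of_lt (lt_of_le_of_lt (by positivity) h)
  simp only [chooseZ, if_pos h0]
  exact Nat.choose_eq_zero_of_lt (by omega)

lemma chooseZ_symm (m : ℕ) (r : ℤ) : chooseZ m r = chooseZ m ((m:ℤ) - r) := by
  rcases lt_or_ge r 0 with h | h
  · rw [chooseZ_neg h, chooseZ_gt (by omega)]
  rcases lt_or_ge (m:ℤ) r with h2 | h2
  · rw [chooseZ_gt h2, chooseZ_neg (by omega)]
  · simp only [chooseZ, if_pos h, if_pos (by omega : (0:ℤ) ≤ (m:ℤ) - r)]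
    have : ((m:ℤ) - r).toNat = m - r.toNat := by omega
    rw [this, Nat.choose_symm (by omega)]

lemma chooseZ_pascal (m : ℕ) (r : ℤ) : chooseZ (m+1) r = chooseZ m (r-1) + chooseZ m r := by
  rcases lt_or_ge r 0 with h | h
  · rw [chooseZ_neg h, chooseZ_neg (by omega), chooseZ_neg (by omega)]
  rcases eq_or_lt_of_le h with h0 | h0
  · rw [← h0]
    norm_num [chooseZ]
  · simp only [chooseZ, if_pos h, if_pos (by omega : (0:ℤ) ≤ r - 1)]
    have h1 : r.toNat = (r-1).toNat + 1 := by omega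
    rw [h1, Nat.choose_succ_succ]

/-- Number of unconstrained ±1 walks of length `m` from `0` to `x`. -/
def cZ (m : ℕ) (x : ℤ) : ℤ := if Even ((m:ℤ) + x) then (chooseZ m (((m:ℤ) + x)/2) : ℤ) else 0

lemma cZ_zero_len (x : ℤ) : cZ 0 x = if x = 0 then 1 else 0 := by
  rcases eq_or_ne x 0 with rfl | hx
  · simp [cZ, chooseZ]
  · simp only [cZ, if_neg hx, Nat.cast_zero, zero_add]
    split_ifs with he
    · rw [Int.even_iff] at he
      rcases lt_or_ge x 0 with h | h
      · rw [chooseZ_neg (by omega)]; norm_num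
      · rw [chooseZ_gt (by omega)]; norm_num
    · rfl

lemma cZ_vanish {m : ℕ} {x : ℤ} (h : (m:ℤ) < |x|) : cZ m x = 0 := by
  simp only [cZ]
  split_ifs with he
  · rw [Int.even_iff] at he
    rcases abs_cases x with ⟨h1, h2⟩ | ⟨h1, h2⟩
    · rw [chooseZ_gt (by omega)]; norm_num
    · rw [chooseZ_neg (by omega)]; norm_num
  · rfl

lemma cZ_neg_arg (m : ℕ) (x : ℤ) : cZ m (-x) = cZ m x := by
  simp only [cZ]
  have hpar : Even ((m:ℤ) + -x) ↔ Even ((m:ℤ) + x) := by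
    simp only [Int.even_iff]; omega
  rcases em (Even ((m:ℤ) + x)) with he | he
  · rw [if_pos (hpar.mpr he), if_pos he]
    rw [Int.even_iff] at he
    have e2 : ((m:ℤ) + -x)/2 = (m:ℤ) - ((m:ℤ) + x)/2 := by omega
    rw [e2, ← chooseZ_symm]
  · rw [if_neg (fun hc => he (hpar.mp hc)), if_neg he]

lemma cZ_pascal (m : ℕ) (x : ℤ) : cZ (m+1) x = cZ m (x-1) + cZ m (x+1) := by
  have hc : ((m+1:ℕ):ℤ) = (m:ℤ) + 1 := by push_cast; ring
  have hpar : Even ((m:ℤ) + (x-1)) ↔ Even (((m+1:ℕ):ℤ) + x) := by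
    rw [hc]; simp only [Int.even_iff]; omega
  have hpar2 : Even ((m:ℤ) + (x+1)) ↔ Even (((m+1:ℕ):ℤ) + x) := by
    rw [hc]; simp only [Int.even_iff]; omega
  simp only [cZ]
  rcases em (Even (((m+1:ℕ):ℤ) + x)) with he | he
  · rw [if_pos he, if_pos (hpar.mpr he), if_pos (hpar2.mpr he)]
    rw [hc, Int.even_iff] at he
    have e1 : ((m:ℤ) + (x-1))/2 = (((m+1:ℕ):ℤ) + x)/2 - 1 := by rw [hc]; omega
    have e2 : ((m:ℤ) + (x+1))/2 = (((m+1:ℕ):ℤ) + x)/2 := by rw [hc]; omega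
    rw [e1, e2, chooseZ_pascal m ((((m+1:ℕ):ℤ) + x)/2)]
    push_cast; ring
  · rw [if_neg he, if_neg (fun hc => he (hpar.mp hc)), if_neg (fun hc => he (hpar2.mp hc))]
    norm_num

lemma cZ_double (n : ℕ) (y : ℤ) : cZ (2*n) (2*y) = (chooseZ (2*n) ((n:ℤ) + y) : ℤ) := by
  have he : Even (((2*n:ℕ):ℤ) + 2*y) := by simp only [Int.even_iff]; push_cast; omega
  rw [cZ, if_pos he]
  have e : (((2*n:ℕ):ℤ) + 2*y)/2 = (n:ℤ) + y := by push_cast; omega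
  rw [e]

/-- One term of the reflection sum. -/
def Gf (m t : ℕ) (x : ℤ) (j : ℤ) : ℤ :=
  cZ m (x + 2*j*((t:ℤ)+2)) - cZ m (-2 - x + 2*j*((t:ℤ)+2))

/-- Reflection-principle count for walks `0 → x` of length `m` staying in `[0,t]`. -/
noncomputable def G (m t : ℕ) (x : ℤ) : ℤ :=
  ∑ j ∈ Finset.Icc (-(m:ℤ)-1) ((m:ℤ)+1), Gf m t x j

lemma cZ1_vanish {m t : ℕ} {x j : ℤ} (h1 : -1 ≤ x) (h2 : x ≤ (t:ℤ)+1)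
    (hj : (m:ℤ)+1 ≤ |j|) : cZ m (x + 2*j*((t:ℤ)+2)) = 0 := by
  apply cZ_vanish
  set L : ℤ := (t:ℤ)+2 with hL
  have hL2 : 2 ≤ L := by omega
  rcases abs_cases j with ⟨e, hj0⟩ | ⟨e, hj0⟩
  · rw [e] at hj
    have : 2*((m:ℤ)+1)*L ≤ 2*j*L := by
      apply mul_le_mul_of_nonneg_right _ (by omega)
      omega
    have h4 : 2*((m:ℤ)+1)*2 ≤ 2*((m:ℤ)+1)*L := by
      apply mul_le_mul_of_nonneg_left hL2 (by positivity)
    rw [abs_of_nonneg (by nlinarith)]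
    nlinarith
  · rw [e] at hj
    have : 2*j*L ≤ 2*(-(m:ℤ)-1)*L := by
      apply mul_le_mul_of_nonneg_right _ (by omega)
      omega
    have h4 : 2*(-(m:ℤ)-1)*L ≤ 2*(-(m:ℤ)-1)*2 := by nlinarith
    rw [abs_of_nonpos (by nlinarith)]
    nlinarith

lemma cZ2_vanish {m t : ℕ} {x j : ℤ} (h1 : -1 ≤ x) (h2 : x ≤ (t:ℤ)+1)
    (hj : (m:ℤ)+1 ≤ |j|) : cZ m (-2 - x + 2*j*((t:ℤ)+2)) = 0 := by
  apply cZ_vanish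
  set L : ℤ := (t:ℤ)+2 with hL
  have hL2 : 2 ≤ L := by omega
  rcases abs_cases j with ⟨e, hj0⟩ | ⟨e, hj0⟩
  · rw [e] at hj
    have h3 : 2*((m:ℤ)+1)*L ≤ 2*j*L := by
      apply mul_le_mul_of_nonneg_right _ (by omega); omega
    have h4 : 2*((m:ℤ)+1)*2 ≤ 2*((m:ℤ)+1)*L := by
      apply mul_le_mul_of_nonneg_left hL2 (by positivity)
    rw [abs_of_nonneg (by nlinarith)]
    nlinarith
  · rw [e] at hj
    have h3 : 2*j*L ≤ 2*(-(m:ℤ)-1)*L := by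
      apply mul_le_mul_of_nonneg_right _ (by omega); omega
    have h4 : 2*(-(m:ℤ)-1)*L ≤ 2*(-(m:ℤ)-1)*2 := by nlinarith
    rw [abs_of_nonpos (by nlinarith)]
    nlinarith

lemma Gf_vanish {m t : ℕ} {x j : ℤ} (h1 : -1 ≤ x) (h2 : x ≤ (t:ℤ)+1)
    (hj : (m:ℤ)+1 ≤ |j|) : Gf m t x j = 0 := by
  rw [Gf, cZ1_vanish h1 h2 hj, cZ2_vanish h1 h2 hj, sub_zero]

lemma G_ext {m t : ℕ} {x : ℤ} (M : ℕ) (hM : m ≤ M) (h1 : -1 ≤ x) (h2 : x ≤ (t:ℤ)+1) :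
    ∑ j ∈ Finset.Icc (-(M:ℤ)-1) ((M:ℤ)+1), Gf m t x j = G m t x := by
  rw [G]
  apply (Finset.sum_subset _ _).symm
  · intro j hj
    simp only [Finset.mem_Icc] at hj ⊢
    omega
  · intro j hj hj2
    simp only [Finset.mem_Icc] at hj hj2
    apply Gf_vanish h1 h2
    rcases abs_cases j with ⟨e, _⟩ | ⟨e, _⟩ <;> omega

lemma G_bottom (m t : ℕ) : G m t (-1) = 0 := by
  rw [G]
  apply Finset.sum_eq_zero
  intro j _
  rw [Gf]
  ring_nf

lemma sum_Icc_shift (f : ℤ → ℤ) (a b : ℤ) :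
    ∑ j ∈ Finset.Icc a b, f (j-1) = ∑ j ∈ Finset.Icc (a-1) (b-1), f j := by
  rw [show a - 1 = a + -1 from by ring, show b - 1 = b + -1 from by ring,
    ← Finset.map_add_right_Icc, Finset.sum_map]
  apply Finset.sum_congr rfl
  intro j _
  simp [addRightEmbedding, sub_eq_add_neg]

lemma G_top (m t : ℕ) : G m t ((t:ℤ)+1) = 0 := by
  have key : ∀ j : ℤ, Gf m t ((t:ℤ)+1) j = cZ m (((t:ℤ)+1) + 2*j*((t:ℤ)+2))
      - cZ m (((t:ℤ)+1) + 2*(j-1)*((t:ℤ)+2)) := by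
    intro j
    rw [Gf]
    congr 2
    ring
  rw [G]
  simp only [key]
  rw [Finset.sum_sub_distrib, sum_Icc_shift (fun j => cZ m (((t:ℤ)+1) + 2*j*((t:ℤ)+2)))]
  have e1 : Finset.Icc (-(m:ℤ)-1) ((m:ℤ)+1)
      = insert ((m:ℤ)+1) (Finset.Icc (-(m:ℤ)-1) ((m:ℤ))) := by
    ext j; simp only [Finset.mem_Icc, Finset.mem_insert]; omega
  have e2 : Finset.Icc (-(m:ℤ)-1-1) ((m:ℤ)+1-1)
      = insert (-(m:ℤ)-2) (Finset.Icc (-(m:ℤ)-1) ((m:ℤ))) := by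
    ext j; simp only [Finset.mem_Icc, Finset.mem_insert]; omega
  rw [e1, e2, Finset.sum_insert (by simp only [Finset.mem_Icc]; omega),
    Finset.sum_insert (by simp only [Finset.mem_Icc]; omega)]
  have v1 : cZ m (((t:ℤ)+1) + 2*((m:ℤ)+1)*((t:ℤ)+2)) = 0 :=
    cZ1_vanish (by omega) (by omega) (by rw [abs_of_nonneg (by positivity)])
  have v2 : cZ m (((t:ℤ)+1) + 2*(-(m:ℤ)-2)*((t:ℤ)+2)) = 0 :=
    cZ1_vanish (by omega) (by omega) (by rw [abs_of_nonpos (by omega)]; omega)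
  rw [v1, v2]
  ring

lemma G_pascal {t : ℕ} (m : ℕ) {x : ℤ} (h1 : 0 ≤ x) (h2 : x ≤ (t:ℤ)) :
    G (m+1) t x = G m t (x-1) + G m t (x+1) := by
  have key : ∀ j : ℤ, Gf (m+1) t x j = Gf m t (x-1) j + Gf m t (x+1) j := by
    intro j
    simp only [Gf, cZ_pascal]
    have e1 : x + 2*j*((t:ℤ)+2) - 1 = (x-1) + 2*j*((t:ℤ)+2) := by ring
    have e2 : x + 2*j*((t:ℤ)+2) + 1 = (x+1) + 2*j*((t:ℤ)+2) := by ring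
    have e3 : -2 - x + 2*j*((t:ℤ)+2) - 1 = -2 - (x+1) + 2*j*((t:ℤ)+2) := by ring
    have e4 : -2 - x + 2*j*((t:ℤ)+2) + 1 = -2 - (x-1) + 2*j*((t:ℤ)+2) := by ring
    rw [e1, e2, e3, e4]
    ring
  rw [G]
  simp only [key]
  rw [Finset.sum_add_distrib]
  have c1 : ((m+1:ℕ):ℤ) = (m:ℤ)+1 := by push_cast; ring
  rw [show (-(((m+1:ℕ)):ℤ)-1) = (-((m+1:ℕ):ℤ)-1) from rfl]
  rw [c1]
  have r1 : ∑ j ∈ Finset.Icc (-((m:ℤ)+1)-1) (((m:ℤ)+1)+1), Gf m t (x-1) j = G m t (x-1) := by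
    have := G_ext (m := m) (t := t) (x := x-1) (m+1) (by omega) (by omega) (by omega)
    rw [← this]; congr 1 <;> push_cast <;> ring_nf
  have r2 : ∑ j ∈ Finset.Icc (-((m:ℤ)+1)-1) (((m:ℤ)+1)+1), Gf m t (x+1) j = G m t (x+1) := by
    have := G_ext (m := m) (t := t) (x := x+1) (m+1) (by omega) (by omega) (by omega)
    rw [← this]; congr 1 <;> push_cast <;> ring_nf
  rw [r1, r2]

/-- Recursive count of walks of length `m` from `0` to `x` staying in `[0,t]`. -/
def d : ℕ → ℕ → ℕ → ℕ
  | 0, x, _ => if x = 0 then 1 else 0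
  | (m+1), x, t =>
    if x = 0 then d m 1 t
    else if x ≤ t then d m (x-1) t + d m (x+1) t else 0

lemma d_top (m t : ℕ) : d m (t+1) t = 0 := by
  cases m with
  | zero => simp [d]
  | succ m => simp [d]

lemma d_eq_G : ∀ (m x t : ℕ), x ≤ t + 1 → (d m x t : ℤ) = G m t (x:ℤ) := by
  intro m
  induction m with
  | zero =>
    intro x t hx
    rw [G]
    simp only [Nat.cast_zero]
    have e1 : Finset.Icc (-(0:ℤ)-1) ((0:ℤ)+1) = {-1, 0, 1} := by decide
    rw [show (-(0:ℤ)-1) = -1 from by ring] at e1 ⊢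
    rw [show ((0:ℤ)+1) = 1 from by ring] at e1 ⊢
    rw [e1]
    rw [Finset.sum_insert (by decide), Finset.sum_insert (by decide), Finset.sum_singleton]
    simp only [Gf, Nat.cast_zero, cZ_zero_len]
    have l1 : (t:ℤ)+2 ≠ 0 := by omega
    rw [d]
    have hxb : (0:ℤ) ≤ (x:ℤ) ∧ (x:ℤ) ≤ (t:ℤ)+1 := ⟨by positivity, by exact_mod_cast hx⟩
    obtain ⟨hx0, hx1⟩ := hxb
    have v1 : ((x:ℤ) + 2*(-1)*((t:ℤ)+2) = 0) = False := by simp; omega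
    have v2 : (-2 - (x:ℤ) + 2*(-1)*((t:ℤ)+2) = 0) = False := by simp; omega
    have v3 : (-2 - (x:ℤ) + 2*0*((t:ℤ)+2) = 0) = False := by simp; omega
    have v4 : ((x:ℤ) + 2*1*((t:ℤ)+2) = 0) = False := by simp; omega
    have v5 : (-2 - (x:ℤ) + 2*1*((t:ℤ)+2) = 0) = False := by simp; omega
    rw [if_neg (by omega : ¬((x:ℤ) + 2*(-1)*((t:ℤ)+2) = 0)),
      if_neg (by omega : ¬(-2 - (x:ℤ) + 2*(-1)*((t:ℤ)+2) = 0)),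
      if_neg (by omega : ¬(-2 - (x:ℤ) + 2*0*((t:ℤ)+2) = 0)),
      if_neg (by omega : ¬((x:ℤ) + 2*1*((t:ℤ)+2) = 0)),
      if_neg (by omega : ¬(-2 - (x:ℤ) + 2*1*((t:ℤ)+2) = 0))]
    rcases eq_or_ne x 0 with rfl | hx0'
    · norm_num
    · have hz : (x:ℤ) ≠ 0 := by exact_mod_cast hx0'
      rw [if_neg hx0', if_neg (by omega : ¬((x:ℤ) + 2*0*((t:ℤ)+2) = 0))]
      norm_num
  | succ m ih =>
    intro x t hx
    rcases eq_or_ne x 0 with rfl | hx0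
    · rw [show d (m+1) 0 t = d m 1 t from by rw [d]; simp]
      rw [ih 1 t (by omega)]
      have hp := G_pascal (t := t) m (x := 0) (by omega) (by omega)
      rw [show ((0:ℕ):ℤ) = (0:ℤ) from rfl] at *
      rw [hp, show (0:ℤ)-1 = -1 from by ring, G_bottom, show (0:ℤ)+1 = ((1:ℕ):ℤ) from by norm_num]
      ring
    · rcases eq_or_ne x (t+1) with rfl | hxt
      · rw [d_top]
        push_cast
        rw [G_top]
      · have hxle : x ≤ t := by omega
        rw [show d (m+1) x t = d m (x-1) t + d m (x+1) t from by
          rw [d]; rw [if_neg hx0, if_pos hxle]]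
        have hp := G_pascal (t := t) m (x := (x:ℤ)) (by positivity) (by exact_mod_cast hxle)
        rw [hp]
        have i1 := ih (x-1) t (by omega)
        have i2 := ih (x+1) t (by omega)
        have c1 : ((x-1:ℕ):ℤ) = (x:ℤ)-1 := by omega
        have c2 : ((x+1:ℕ):ℤ) = (x:ℤ)+1 := by omega
        rw [c1] at i1
        rw [c2] at i2
        push_cast [← i1, ← i2]
        ring

/-- Walk of length `m` from `0` to `x`, bounded by `t`, zero-padded beyond `m`. -/
def WalkP (m x t : ℕ) (a : ℕ → ℕ) : Prop :=
  a 0 = 0 ∧ (∀ i, i < m → (a (i+1) = a i + 1 ∨ a i = a (i+1) + 1)) ∧ a m = x ∧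
  (∀ i, a i ≤ t) ∧ ∀ i, m < i → a i = 0

instance WalkP.finite (m x t : ℕ) : Finite {a // WalkP m x t a} := by
  apply Finite.of_injective
    (fun a => (fun i : Fin (m+1) => (⟨a.1 i, Nat.lt_succ_of_le (a.2.2.2.2.1 i)⟩ : Fin (t+1))))
  intro a b hab
  have hv : ∀ i : ℕ, i ≤ m → a.1 i = b.1 i := by
    intro i hi
    have := congrFun hab ⟨i, by omega⟩
    simpa using congrArg Fin.val this
  apply Subtype.ext
  funext i
  rcases le_or_gt i m with h | h
  · exact hv i h
  · rw [a.2.2.2.2.2 i h, b.2.2.2.2.2 i h]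

lemma walk_card_zero (x t : ℕ) :
    Nat.card {a // WalkP 0 x t a} = if x = 0 then 1 else 0 := by
  rcases eq_or_ne x 0 with rfl | hx
  · rw [if_pos rfl]
    have : Unique {a // WalkP 0 0 t a} := by
      refine ⟨⟨⟨fun _ => 0, by refine ⟨rfl, by omega, rfl, fun i => Nat.zero_le t, fun i _ => rfl⟩⟩⟩, ?_⟩
      rintro ⟨a, h0, hs, hm, hb, hp⟩
      apply Subtype.ext
      funext i
      rcases Nat.eq_zero_or_pos i with rfl | hi
      · exact h0
      · exact hp i hi
    exact Nat.card_unique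
  · rw [if_neg hx]
    have : IsEmpty {a // WalkP 0 x t a} := by
      constructor
      rintro ⟨a, h0, hs, hm, hb, hp⟩
      exact hx (by rw [← hm, h0])
    exact Nat.card_of_isEmpty

lemma walk_succ_zero (m t : ℕ) (a : ℕ → ℕ) : WalkP (m+1) 0 t a ↔ WalkP m 1 t a := by
  constructor
  · rintro ⟨h0, hs, hm, hb, hp⟩
    have ham : a m = 1 := by
      rcases hs m (by omega) with h | h
      · omega
      · omega
    exact ⟨h0, fun i hi => hs i (by omega), ham, hb, fun i hi => by
      rcases eq_or_ne i (m+1) with rfl | hne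
      · exact hm
      · exact hp i (by omega)⟩
  · rintro ⟨h0, hs, hm, hb, hp⟩
    have hm1 : a (m+1) = 0 := hp (m+1) (by omega)
    refine ⟨h0, fun i hi => ?_, hm1, hb, fun i hi => hp i (by omega)⟩
    rcases eq_or_ne i m with rfl | hne
    · right; omega
    · exact hs i (by omega)

/-- Truncate a walk to length `m`. -/
def trunc (m : ℕ) (a : ℕ → ℕ) : ℕ → ℕ := fun i => if i ≤ m then a i else 0

lemma walk_card_succ (m x t : ℕ) (hx1 : 1 ≤ x) (hxt : x ≤ t) :
    Nat.card {a // WalkP (m+1) x t a}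
      = Nat.card {a // WalkP m (x-1) t a} + Nat.card {a // WalkP m (x+1) t a} := by
  rw [← Nat.card_sum]
  apply Nat.card_congr
  have trunc_walk : ∀ (a : ℕ → ℕ) (y : ℕ), WalkP (m+1) x t a → a m = y → WalkP m y t (trunc m a) := by
    rintro a y ⟨h0, hs, hm, hb, hp⟩ hy
    refine ⟨by simp [trunc, h0], ?_, ?_, ?_, ?_⟩
    · intro i hi
      have e1 : trunc m a (i+1) = a (i+1) := if_pos (by omega)
      have e2 : trunc m a i = a i := if_pos (by omega)
      rw [e1, e2]
      exact hs i (by omega)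
    · simp only [trunc]; rw [if_pos le_rfl, hy]
    · intro i
      simp only [trunc]
      split
      · exact hb i
      · exact Nat.zero_le t
    · intro i hi
      exact if_neg (by omega)
  have ext_walk : ∀ (b : ℕ → ℕ) (y : ℕ), WalkP m y t b → (y = x - 1 ∨ y = x + 1) →
      WalkP (m+1) x t (Function.update b (m+1) x) := by
    rintro b y ⟨h0, hs, hm, hb, hp⟩ hy
    refine ⟨?_, ?_, ?_, ?_, ?_⟩
    · rw [Function.update_of_ne (by omega)]; exact h0
    · intro i hi
      rcases eq_or_ne i m with rfl | hne
      · rw [Function.update_self, Function.update_of_ne (by omega : i ≠ i + 1), hm]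
        omega
      · rw [Function.update_of_ne (by omega : i + 1 ≠ m+1), Function.update_of_ne (by omega : i ≠ m+1)]
        exact hs i (by omega)
    · exact Function.update_self _ _ _
    · intro i
      rcases eq_or_ne i (m+1) with rfl | hne
      · rw [Function.update_self]; exact hxt
      · rw [Function.update_of_ne hne]; exact hb i
    · intro i hi
      rw [Function.update_of_ne (by omega)]
      exact hp i (by omega)
  have am_cases : ∀ (a : ℕ → ℕ), WalkP (m+1) x t a → a m = x - 1 ∨ a m = x + 1 := by
    rintro a ⟨h0, hs, hm, hb, hp⟩
    rcases hs m (by omega) with h | h <;> omega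
  refine ⟨fun a => if h' : a.1 m = x + 1
      then Sum.inr ⟨trunc m a.1, trunc_walk a.1 _ a.2 h'⟩
      else Sum.inl ⟨trunc m a.1, trunc_walk a.1 _ a.2 (by rcases am_cases a.1 a.2 with h | h <;> omega)⟩,
    Sum.elim (fun b => ⟨Function.update b.1 (m+1) x, ext_walk b.1 _ b.2 (Or.inl rfl)⟩)
      (fun b => ⟨Function.update b.1 (m+1) x, ext_walk b.1 _ b.2 (Or.inr rfl)⟩), ?_, ?_⟩
  · rintro ⟨a, ha⟩
    have key : Function.update (trunc m a) (m+1) x = a := by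
      funext i
      rcases eq_or_ne i (m+1) with rfl | hne
      · rw [Function.update_self, ha.2.2.1]
      · rw [Function.update_of_ne hne]
        simp only [trunc]
        split
        · rfl
        · exact (ha.2.2.2.2 i (by omega)).symm
    by_cases h' : a m = x + 1
    · simp only [dif_pos h', Sum.elim_inr]
      exact Subtype.ext key
    · simp only [dif_neg h', Sum.elim_inl]
      exact Subtype.ext key
  · rintro (⟨b, hb⟩ | ⟨b, hb⟩)
    · have hbm : Function.update b (m+1) x m = x - 1 := by
        rw [Function.update_of_ne (by omega)]; exact hb.2.2.1
      dsimp only [Sum.elim_inl]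
      rw [dif_neg (by omega)]
      congr 1
      apply Subtype.ext
      funext i
      simp only [trunc]
      split
      · rw [Function.update_of_ne (by omega)]
      · exact (hb.2.2.2.2 i (by omega)).symm
    · have hbm : Function.update b (m+1) x m = x + 1 := by
        rw [Function.update_of_ne (by omega)]; exact hb.2.2.1
      dsimp only [Sum.elim_inr]
      rw [dif_pos hbm]
      congr 1
      apply Subtype.ext
      funext i
      simp only [trunc]
      split
      · rw [Function.update_of_ne (by omega)]
      · exact (hb.2.2.2.2 i (by omega)).symm

lemma walk_card (m : ℕ) : ∀ x t, Nat.card {a // WalkP m x t a} = d m x t := by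
  induction m with
  | zero => intro x t; rw [walk_card_zero, d]
  | succ m ih =>
    intro x t
    rcases eq_or_ne x 0 with rfl | hx0
    · rw [show d (m+1) 0 t = d m 1 t from by rw [d]; simp, ← ih 1 t]
      exact Nat.card_congr (Equiv.subtypeEquivRight (walk_succ_zero m t))
    · rcases le_or_gt x t with hxt | hxt
      · rw [walk_card_succ m x t (by omega) hxt, ih (x-1) t, ih (x+1) t, d,
          if_neg hx0, if_pos hxt]
      · rw [show d (m+1) x t = 0 from by rw [d]; rw [if_neg hx0, if_neg (by omega)]]
        have : IsEmpty {a // WalkP (m+1) x t a} := by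
          constructor
          rintro ⟨a, h0, hs, hm, hb, hp⟩
          have := hb (m+1)
          omega
        exact Nat.card_of_isEmpty

lemma dyck_iff_walk {n : ℕ} (hn : 1 ≤ n) (t : ℕ) (a : ℕ → ℕ) :
    (IsDyckSeq n a ∧ ∀ i, a i ≤ t) ↔ WalkP (2*n) 0 t a := by
  constructor
  · rintro ⟨⟨h1, h2, h3, h0, hp⟩, hb⟩
    refine ⟨h0, ?_, h2, hb, hp⟩
    intro i hi
    rcases Nat.eq_zero_or_pos i with rfl | hi1
    · left; show a 1 = a 0 + 1; omega
    · exact h3 i hi1 hi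
  · rintro ⟨h0, hs, hm, hb, hp⟩
    have h1 : a 1 = 1 := by
      have h := hs 0 (by omega)
      simp only [Nat.zero_add] at h
      rcases h with h | h <;> omega
    exact ⟨⟨h1, hm, fun i hi1 hi2 => hs i hi2, h0, hp⟩, hb⟩

lemma dyck_le {n : ℕ} {a : ℕ → ℕ} (h : IsDyckSeq n a) : ∀ i, a i ≤ 2*n := by
  obtain ⟨h1, h2, h3, h0, hp⟩ := h
  have key : ∀ i, i ≤ 2*n → a i ≤ i := by
    intro i
    induction i with
    | zero => intro _; omega
    | succ i ih =>
      intro hi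
      rcases Nat.eq_zero_or_pos i with rfl | hi1
      · show a 1 ≤ 1; omega
      · rcases h3 i hi1 (by omega) with h | h
        · have := ih (by omega); omega
        · have := ih (by omega); omega
  intro i
  rcases le_or_gt i (2*n) with h | h
  · exact le_trans (key i h) h
  · rw [hp i h]; omega

lemma dyck_walk {n : ℕ} {a : ℕ → ℕ} (h : IsDyckSeq n a) : WalkP (2*n) 0 (2*n) a := by
  rcases Nat.eq_zero_or_pos n with rfl | hn
  · exfalso
    obtain ⟨h1, h2, h3, h0, hp⟩ := h
    have := hp 1 (by omega)
    omega
  · exact (dyck_iff_walk hn (2*n) a).mp ⟨h, dyck_le h⟩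

instance dyck_finite (n : ℕ) : Finite {a // IsDyckSeq n a} := by
  apply Finite.of_injective
    (fun (a : {a // IsDyckSeq n a}) => (⟨a.1, dyck_walk a.2⟩ : {a // WalkP (2*n) 0 (2*n) a}))
  intro a b hab
  simpa [Subtype.ext_iff] using hab

lemma card_split (n k : ℕ) (hk : 1 ≤ k) :
    Nat.card {a // IsDyckSeq n a ∧ ∃ i, k ≤ a i}
      + Nat.card {a // IsDyckSeq n a ∧ ∀ i, a i ≤ k-1}
      = Nat.card {a // IsDyckSeq n a} := by
  classical
  have e1 : {s : {a // IsDyckSeq n a} // ∃ i, k ≤ s.1 i} ≃ {a // IsDyckSeq n a ∧ ∃ i, k ≤ a i} := by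
    exact Equiv.subtypeSubtypeEquivSubtypeInter (IsDyckSeq n) (fun a => ∃ i, k ≤ a i)
  have e2 : {s : {a // IsDyckSeq n a} // ¬ ∃ i, k ≤ s.1 i} ≃ {a // IsDyckSeq n a ∧ ∀ i, a i ≤ k-1} := by
    refine Equiv.trans (Equiv.subtypeEquivRight ?_)
      (by exact Equiv.subtypeSubtypeEquivSubtypeInter (IsDyckSeq n) (fun a => ∀ i, a i ≤ k-1))
    intro s
    rw [not_exists]
    constructor <;> intro h i <;> have := h i <;> omega
  have e3 := Equiv.sumCompl (fun s : {a // IsDyckSeq n a} => ∃ i, k ≤ s.1 i)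
  rw [← Nat.card_congr e1, ← Nat.card_congr e2, ← Nat.card_sum, Nat.card_congr e3]

lemma bounded_card_eq (n t : ℕ) (hn : 1 ≤ n) :
    Nat.card {a // IsDyckSeq n a ∧ ∀ i, a i ≤ t} = d (2*n) 0 t := by
  rw [← walk_card]
  exact Nat.card_congr (Equiv.subtypeEquivRight (dyck_iff_walk hn t))

lemma total_card_eq (n : ℕ) (hn : 1 ≤ n) :
    Nat.card {a // IsDyckSeq n a} = d (2*n) 0 (2*n) := by
  rw [← bounded_card_eq n (2*n) hn]
  apply Nat.card_congr
  apply Equiv.subtypeEquivRight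
  intro a
  exact ⟨fun h => ⟨h, dyck_le h⟩, fun h => h.1⟩

lemma G_eval (n t : ℕ) :
    G (2*n) t 0 = ∑ j ∈ Finset.Icc (-((2*n:ℕ):ℤ)-1) (((2*n:ℕ):ℤ)+1),
      ((chooseZ (2*n) ((n:ℤ) + j*((t:ℤ)+2)) : ℤ) - (chooseZ (2*n) ((n:ℤ) - 1 + j*((t:ℤ)+2)) : ℤ)) := by
  rw [G]
  apply Finset.sum_congr rfl
  intro j _
  rw [Gf]
  have e1 : (0:ℤ) + 2*j*((t:ℤ)+2) = 2*(j*((t:ℤ)+2)) := by ring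
  have e2 : -2 - (0:ℤ) + 2*j*((t:ℤ)+2) = 2*(j*((t:ℤ)+2) - 1) := by ring
  rw [e1, e2, cZ_double, cZ_double]
  congr 2 <;> ring

lemma total_eval (n : ℕ) (hn : 1 ≤ n) :
    ((d (2*n) 0 (2*n) : ℕ) : ℤ) = (chooseZ (2*n) (n:ℤ) : ℤ) - (chooseZ (2*n) ((n:ℤ)-1) : ℤ) := by
  rw [d_eq_G (2*n) 0 (2*n) (by omega)]
  rw [show ((0:ℕ):ℤ) = (0:ℤ) from rfl, G_eval n (2*n)]
  rw [Finset.sum_eq_single 0]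
  · norm_num
  · intro j hj hj0
    rcases lt_or_ge 0 j with h | h
    · have h1 : (1:ℤ) ≤ j := h
      have h2 : (2*(n:ℤ)+2) ≤ j * (((2*n:ℕ):ℤ)+2) := by
        calc (2*(n:ℤ)+2) = 1 * (((2*n:ℕ):ℤ)+2) := by push_cast; ring
        _ ≤ j * (((2*n:ℕ):ℤ)+2) := by
            apply mul_le_mul_of_nonneg_right h1 (by positivity)
      rw [chooseZ_gt (by push_cast at h2 ⊢; omega), chooseZ_gt (by push_cast at h2 ⊢; omega)]
      norm_num
    · have h1 : j ≤ -1 := by omega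
      have h2 : j * (((2*n:ℕ):ℤ)+2) ≤ (-1) * (((2*n:ℕ):ℤ)+2) := by
        apply mul_le_mul_of_nonneg_right h1 (by positivity)
      rw [chooseZ_neg (by push_cast at h2 ⊢; omega), chooseZ_neg (by push_cast at h2 ⊢; omega)]
      norm_num
  · intro h
    exfalso
    apply h
    simp only [Finset.mem_Icc]
    omega

lemma key_term (n : ℕ) (y : ℤ) :
    -((chooseZ (2*n) ((n:ℤ) + y) : ℤ) - (chooseZ (2*n) ((n:ℤ) - 1 + y) : ℤ))
      - ((chooseZ (2*n) ((n:ℤ) + -y) : ℤ) - (chooseZ (2*n) ((n:ℤ) - 1 + -y) : ℤ))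
    = (chooseZ (2*n+2) ((n:ℤ) + 1 - y) : ℤ) - 4 * (chooseZ (2*n) ((n:ℤ) - y) : ℤ) := by
  have s1 : chooseZ (2*n) ((n:ℤ) - 1 + y) = chooseZ (2*n) ((n:ℤ) + 1 - y) := by
    rw [chooseZ_symm (2*n) ((n:ℤ) - 1 + y)]
    congr 1
    push_cast
    ring
  have s2 : chooseZ (2*n) ((n:ℤ) + y) = chooseZ (2*n) ((n:ℤ) - y) := by
    rw [chooseZ_symm (2*n) ((n:ℤ) + y)]
    congr 1
    push_cast
    ring
  have p1 : chooseZ (2*n+1+1) ((n:ℤ) + 1 - y)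
      = chooseZ (2*n+1) ((n:ℤ) - y) + chooseZ (2*n+1) ((n:ℤ) + 1 - y) := by
    rw [chooseZ_pascal]
    congr 2
    ring
  have p2 : chooseZ (2*n+1) ((n:ℤ) - y)
      = chooseZ (2*n) ((n:ℤ) - 1 - y) + chooseZ (2*n) ((n:ℤ) - y) := by
    rw [chooseZ_pascal]
    congr 2
    ring
  have p3 : chooseZ (2*n+1) ((n:ℤ) + 1 - y)
      = chooseZ (2*n) ((n:ℤ) - y) + chooseZ (2*n) ((n:ℤ) + 1 - y) := by
    rw [chooseZ_pascal]
    congr 2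
    ring
  have s3 : chooseZ (2*n) ((n:ℤ) - 1 + -y) = chooseZ (2*n) ((n:ℤ) - 1 - y) := by
    ring_nf
  have s4 : chooseZ (2*n) ((n:ℤ) + -y) = chooseZ (2*n) ((n:ℤ) - y) := by
    ring_nf
  rw [show 2*n+2 = 2*n+1+1 from rfl, p1, p2, p3, s1, s2, s3, s4]
  push_cast
  ring

lemma chooseZ_coe (m x : ℕ) : chooseZ m (x:ℤ) = m.choose x := by
  simp [chooseZ]

def hterm (n k : ℕ) (j : ℤ) : ℤ :=
  (chooseZ (2*n) ((n:ℤ) + j*((k:ℤ)+1)) : ℤ) - (chooseZ (2*n) ((n:ℤ) - 1 + j*((k:ℤ)+1)) : ℤ)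

def kterm (n k : ℕ) (j : ℤ) : ℤ :=
  (chooseZ (2*n+2) ((n:ℤ) + 1 - j*((k:ℤ)+1)) : ℤ) - 4 * (chooseZ (2*n) ((n:ℤ) - j*((k:ℤ)+1)) : ℤ)

lemma hterm_add_neg (n k : ℕ) (j : ℤ) : hterm n k j + hterm n k (-j) = -(kterm n k j) := by
  have := key_term n (j*((k:ℤ)+1))
  rw [hterm, hterm, kterm, show (-j)*((k:ℤ)+1) = -(j*((k:ℤ)+1)) from by ring]
  linarith [this]

lemma sum_hterm (n k : ℕ) (N : ℤ) (hN : 0 ≤ N) :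
    ∑ j ∈ Finset.Icc (-N) N, hterm n k j
      = hterm n k 0 - ∑ j ∈ Finset.Icc 1 N, kterm n k j := by
  have e1 : Finset.Icc (-N) N = Finset.Icc (-N) (-1) ∪ Finset.Icc 0 N := by
    ext j; simp only [Finset.mem_union, Finset.mem_Icc]; omega
  have e2 : Finset.Icc (0:ℤ) N = insert 0 (Finset.Icc 1 N) := by
    ext j; simp only [Finset.mem_insert, Finset.mem_Icc]; omega
  rw [e1, Finset.sum_union (by
      rw [Finset.disjoint_left]
      intro j hj1 hj2
      simp only [Finset.mem_Icc] at hj1 hj2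
      omega), e2, Finset.sum_insert (by simp only [Finset.mem_Icc]; omega)]
  have hneg : ∑ j ∈ Finset.Icc (-N) (-1), hterm n k j
      = ∑ j ∈ Finset.Icc (1:ℤ) N, hterm n k (-j) := by
    have himg : Finset.Icc (-N) (-1) = (Finset.Icc (1:ℤ) N).image (fun j => -j) := by
      ext j
      simp only [Finset.mem_Icc, Finset.mem_image]
      constructor
      · intro hj; exact ⟨-j, by omega, by ring⟩
      · rintro ⟨b, hb, rfl⟩; omega
    rw [himg, Finset.sum_image (by intro a _ b _ hab; exact neg_inj.mp hab)]
  rw [hneg]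
  have e3 : ∑ j ∈ Finset.Icc (1:ℤ) N, hterm n k (-j)
      = ∑ j ∈ Finset.Icc (1:ℤ) N, (-(kterm n k j) - hterm n k j) := by
    apply Finset.sum_congr rfl
    intro j _
    have := hterm_add_neg n k j
    linarith
  rw [e3, Finset.sum_sub_distrib]
  have e4 : ∑ j ∈ Finset.Icc (1:ℤ) N, -(kterm n k j) = -∑ j ∈ Finset.Icc (1:ℤ) N, kterm n k j := by
    exact Finset.sum_neg_distrib _
  rw [e4]
  ring

/-- explicit formula for B. -/
theorem stmt9 (n k : ℕ) (hn : 1 ≤ n) (hk : 1 ≤ k) :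
    (B n k : ℤ) =
      (∑ j ∈ Finset.Icc 1 ((n+1)/(k+1)), ((2*n+2).choose (n+1 - j*(k+1)) : ℤ))
        - 4 * ∑ j ∈ Finset.Icc 1 (n/(k+1)), ((2*n).choose (n - j*(k+1)) : ℤ) := by
  have hn0 : n ≠ 0 := by omega
  -- Step 1: B as difference of counts
  have hsplit := card_split n k hk
  have hA := bounded_card_eq n (k-1) hn
  have hT := total_card_eq n hn
  have hB : (B n k : ℤ) = ((d (2*n) 0 (2*n) : ℕ) : ℤ) - ((d (2*n) 0 (k-1) : ℕ) : ℤ) := by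
    rw [B, if_neg hn0]
    rw [hA, hT] at hsplit
    have hz : ((Nat.card {a : ℕ → ℕ // IsDyckSeq n a ∧ ∃ i, k ≤ a i} : ℕ) : ℤ)
        + ((d (2*n) 0 (k-1) : ℕ) : ℤ) = ((d (2*n) 0 (2*n) : ℕ) : ℤ) := by
      exact_mod_cast hsplit
    linarith
  clear hsplit hA hT
  rw [hB, total_eval n hn]
  -- Step 2: A in reflection form
  have hAG : ((d (2*n) 0 (k-1) : ℕ) : ℤ)
      = ∑ j ∈ Finset.Icc (-(((2*n:ℕ):ℤ)+1)) (((2*n:ℕ):ℤ)+1), hterm n k j := by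
    rw [d_eq_G (2*n) 0 (k-1) (by omega), show ((0:ℕ):ℤ) = (0:ℤ) from rfl, G_eval n (k-1)]
    rw [show (-((2*n:ℕ):ℤ)-1) = -(((2*n:ℕ):ℤ)+1) from by ring]
    apply Finset.sum_congr rfl
    intro j _
    have e : (((k-1:ℕ)):ℤ) + 2 = (k:ℤ) + 1 := by omega
    rw [e, hterm]
  rw [hAG, sum_hterm n k (((2*n:ℕ):ℤ)+1) (by positivity)]
  have h0 : hterm n k 0 = (chooseZ (2*n) (n:ℤ) : ℤ) - (chooseZ (2*n) ((n:ℤ)-1) : ℤ) := by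
    rw [hterm]
    norm_num
  rw [h0]
  rw [show ∀ X S : ℤ, X - (X - S) = S from fun X S => by ring]
  -- Step 6: convert to the target natural-indexed sums
  have himg : Finset.Icc (1:ℤ) (((2*n:ℕ):ℤ)+1) = (Finset.Icc (1:ℕ) (2*n+1)).image (fun (j:ℕ) => (j:ℤ)) := by
    ext j
    simp only [Finset.mem_Icc, Finset.mem_image]
    constructor
    · intro hj
      refine ⟨j.toNat, by omega, by omega⟩
    · rintro ⟨b, hb, rfl⟩
      omega
  rw [himg, Finset.sum_image (by intro a _ b _ hab; exact Nat.cast_injective hab)]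
  have ksplit : ∑ j ∈ Finset.Icc (1:ℕ) (2*n+1), kterm n k (j:ℤ)
      = (∑ j ∈ Finset.Icc (1:ℕ) (2*n+1), (chooseZ (2*n+2) ((n:ℤ) + 1 - (j:ℤ)*((k:ℤ)+1)) : ℤ))
        - 4 * ∑ j ∈ Finset.Icc (1:ℕ) (2*n+1), (chooseZ (2*n) ((n:ℤ) - (j:ℤ)*((k:ℤ)+1)) : ℤ) := by
    rw [Finset.mul_sum, ← Finset.sum_sub_distrib]
    apply Finset.sum_congr rfl
    intro j _
    rw [kterm]
  rw [ksplit]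
  congr 1
  · -- first sum
    rw [← Finset.sum_subset (s₁ := Finset.Icc (1:ℕ) ((n+1)/(k+1))) ?_ ?_]
    · apply Finset.sum_congr rfl
      intro j hj
      simp only [Finset.mem_Icc] at hj
      have hle : j * (k+1) ≤ n+1 := (Nat.le_div_iff_mul_le (by omega)).mp hj.2
      have ec : (n:ℤ) + 1 - (j:ℤ)*((k:ℤ)+1) = ((n + 1 - j*(k+1) : ℕ) : ℤ) := by
        rw [Nat.cast_sub hle]
        push_cast
        ring
      rw [ec, chooseZ_coe]
    · intro j hj
      simp only [Finset.mem_Icc] at hj ⊢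
      have := Nat.div_le_self (n+1) (k+1)
      omega
    · intro j hj hj2
      simp only [Finset.mem_Icc] at hj hj2
      have hlt : n + 1 < j * (k+1) := by
        have h2 : (n+1)/(k+1) < j := by omega
        exact (Nat.div_lt_iff_lt_mul (by omega)).mp h2
      have hc : ((n:ℤ) + 1) < (j:ℤ)*((k:ℤ)+1) := by exact_mod_cast hlt
      rw [chooseZ_neg (by linarith)]
      norm_num
  · -- second sum
    congr 1
    rw [← Finset.sum_subset (s₁ := Finset.Icc (1:ℕ) (n/(k+1))) ?_ ?_]
    · apply Finset.sum_congr rfl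
      intro j hj
      simp only [Finset.mem_Icc] at hj
      have hle : j * (k+1) ≤ n := (Nat.le_div_iff_mul_le (by omega)).mp hj.2
      have ec : (n:ℤ) - (j:ℤ)*((k:ℤ)+1) = ((n - j*(k+1) : ℕ) : ℤ) := by
        rw [Nat.cast_sub hle]
        push_cast
        ring
      rw [ec, chooseZ_coe]
    · intro j hj
      simp only [Finset.mem_Icc] at hj ⊢
      have := Nat.div_le_self n (k+1)
      omega
    · intro j hj hj2
      simp only [Finset.mem_Icc] at hj hj2
      have hlt : n < j * (k+1) := by
        have h2 : n/(k+1) < j := by omega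
        exact (Nat.div_lt_iff_lt_mul (by omega)).mp h2
      have hc : (n:ℤ) < (j:ℤ)*((k:ℤ)+1) := by exact_mod_cast hlt
      rw [chooseZ_neg (by linarith)]
      norm_num
end
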